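/- arXiv:2410.09692 — 3 statements merged into one kernel-verified Lean document; each statement's English description precedes it below -/
import Mathlib

section
/- For dropout random matrix V as above with keep probability p, the function W ↦ E[‖Y − (XW)⊙V‖_F²] is minimized (when XᵀX is invertible) at W = p·(XᵀX)⁻¹ XᵀY, provided XᵀX = c·I for some c > 0 (and then the minimizer equals (c/(c+λ))(XᵀX)⁻¹XᵀY with λ = c(1/p − 1)). -/
open MeasureTheory ProbabilityTheory Matrix

/-- Squared Frobenius norm of a real matrix. -/
noncomputable def frobSq {m n : Type*} [Fintype m] [Fintype n] (M : Matrix m n ℝ) : ℝ :=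
  ∑ i, ∑ j, (M i j) ^ 2

lemma integrable_dirac'' {α : Type*} [MeasurableSpace α] [MeasurableSingletonClass α]
    (f : α → ℝ) (hf : Measurable f) (a : α) : Integrable f (Measure.dirac a) := by
  refine ⟨hf.aestronglyMeasurable, ?_⟩
  rw [hasFiniteIntegral_def f _, lintegral_dirac]
  exact ENNReal.coe_lt_top

lemma two_point_integrable (p : ℝ) (f : ℝ → ℝ) (hf : Measurable f) :
    Integrable f
      (ENNReal.ofReal p • Measure.dirac (1/p) + ENNReal.ofReal (1 - p) • Measure.dirac 0) :=
  Integrable.add_measure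
    ((integrable_dirac'' f hf _).smul_measure ENNReal.ofReal_lt_top.ne)
    ((integrable_dirac'' f hf _).smul_measure ENNReal.ofReal_lt_top.ne)

lemma two_point_integral (p : ℝ) (hp : 0 < p) (hp1 : p ≤ 1) (f : ℝ → ℝ) (hf : Measurable f) :
    ∫ x, f x ∂(ENNReal.ofReal p • Measure.dirac (1/p) + ENNReal.ofReal (1 - p) • Measure.dirac 0)
      = p * f (1/p) + (1 - p) * f 0 := by
  rw [integral_add_measure ((integrable_dirac'' f hf _).smul_measure ENNReal.ofReal_lt_top.ne)
    ((integrable_dirac'' f hf _).smul_measure ENNReal.ofReal_lt_top.ne),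
    integral_smul_measure, integral_smul_measure, integral_dirac, integral_dirac,
    ENNReal.toReal_ofReal hp.le, ENNReal.toReal_ofReal (by linarith)]
  simp [smul_eq_mul]

lemma sum_mul_eq_trace {m n : Type*} [Fintype m] [Fintype n] (A B : Matrix m n ℝ) :
    ∑ i, ∑ j, A i j * B i j = Matrix.trace (A * Bᵀ) := by
  simp [Matrix.trace, Matrix.diag, mul_apply]

lemma ls_cross {N C D : ℕ} (X : Matrix (Fin N) (Fin D) ℝ) (R : Matrix (Fin N) (Fin C) ℝ)
    (h : Xᵀ * R = 0) (Δ : Matrix (Fin D) (Fin C) ℝ) :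
    ∑ i, ∑ j, (X * Δ) i j * R i j = 0 := by
  rw [sum_mul_eq_trace]
  have hR : Rᵀ * X = 0 := by
    have := congrArg Matrix.transpose h
    simpa [Matrix.transpose_mul] using this
  rw [Matrix.mul_assoc, ← Matrix.trace_mul_comm, Matrix.mul_assoc, hR]
  simp

/-- If `XᵀX = c·I` with `c > 0`, the expected dropout least-squares loss
`W ↦ E[‖Y − (XW)⊙V‖_F²]` is minimized at `W₀ = p·(XᵀX)⁻¹XᵀY`, which moreover equals
`(c/(c+λ))·(XᵀX)⁻¹XᵀY` with `λ = c(1/p − 1)`. -/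
theorem stmt1 {Ω : Type*} [MeasureSpace Ω] [IsProbabilityMeasure (ℙ : Measure Ω)]
    {N C D : ℕ} (p : ℝ) (hp : 0 < p) (hp1 : p ≤ 1)
    (Y : Matrix (Fin N) (Fin C) ℝ) (X : Matrix (Fin N) (Fin D) ℝ)
    (c : ℝ) (hc : 0 < c) (hX : Xᵀ * X = c • (1 : Matrix (Fin D) (Fin D) ℝ))
    (V : Ω → Matrix (Fin N) (Fin C) ℝ)
    (hmeas : ∀ i j, Measurable fun ω => V ω i j)
    (hdist : ∀ i j, Measure.map (fun ω => V ω i j) ℙ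
      = ENNReal.ofReal p • Measure.dirac (1 / p) + ENNReal.ofReal (1 - p) • Measure.dirac 0)
    (hindep : iIndepFun
      (fun (ij : Fin N × Fin C) ω => V ω ij.1 ij.2) ℙ) :
    (∀ W : Matrix (Fin D) (Fin C) ℝ,
        ∫ ω, frobSq (Y - Matrix.hadamard (X * (p • ((Xᵀ * X)⁻¹ * (Xᵀ * Y)))) (V ω)) ≤
          ∫ ω, frobSq (Y - Matrix.hadamard (X * W) (V ω))) ∧
      p • ((Xᵀ * X)⁻¹ * (Xᵀ * Y)) =
        (c / (c + c * (1 / p - 1))) • ((Xᵀ * X)⁻¹ * (Xᵀ * Y)) := by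
  have hp' : p ≠ 0 := hp.ne'
  have hc' : c ≠ 0 := hc.ne'
  -- the inverse of XᵀX
  have hinv : (Xᵀ * X)⁻¹ = c⁻¹ • (1 : Matrix (Fin D) (Fin D) ℝ) := by
    apply Matrix.inv_eq_right_inv
    rw [hX, Matrix.smul_mul, Matrix.mul_smul, Matrix.one_mul, smul_smul,
      mul_inv_cancel₀ hc', one_smul]
  set W₀ : Matrix (Fin D) (Fin C) ℝ := p • ((Xᵀ * X)⁻¹ * (Xᵀ * Y)) with hW₀def
  -- per-entry measurability
  have hfm : ∀ a b : ℝ, Measurable fun x : ℝ => (a - b * x) ^ 2 := by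
    intro a b; fun_prop
  -- per-entry integral value
  have hval : ∀ (a b : ℝ) (i j),
      ∫ ω, (a - b * V ω i j) ^ 2 = a ^ 2 - 2 * a * b + b ^ 2 / p := by
    intro a b i j
    have h1 : ∫ ω, (a - b * V ω i j) ^ 2
        = ∫ x, (a - b * x) ^ 2 ∂(Measure.map (fun ω => V ω i j) ℙ) := by
      rw [integral_map (hmeas i j).aemeasurable ((hfm a b).aestronglyMeasurable)]
    rw [h1, hdist i j, two_point_integral p hp hp1 _ (hfm a b)]
    field_simp
    ring
  -- per-entry integrability (w.r.t. ℙ)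
  have hint : ∀ (a b : ℝ) (i j), Integrable (fun ω => (a - b * V ω i j) ^ 2) ℙ := by
    intro a b i j
    have h2 : Integrable (fun x : ℝ => (a - b * x) ^ 2)
        (Measure.map (fun ω => V ω i j) ℙ) := by
      rw [hdist i j]; exact two_point_integrable p _ (hfm a b)
    exact (integrable_map_measure ((hfm a b).aestronglyMeasurable)
      (hmeas i j).aemeasurable).mp h2
  -- formula for the expected loss
  have key : ∀ M : Matrix (Fin N) (Fin C) ℝ,
      ∫ ω, frobSq (Y - Matrix.hadamard M (V ω))
        = (∑ i, ∑ j, (M i j - p * Y i j) ^ 2) / p + ∑ i, ∑ j, (1 - p) * (Y i j) ^ 2 := by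
    intro M
    have hent : ∀ ω i j, (Y - Matrix.hadamard M (V ω)) i j = Y i j - M i j * V ω i j := by
      intro ω i j; simp [Matrix.hadamard, Matrix.sub_apply]
    have h1 : ∫ ω, frobSq (Y - Matrix.hadamard M (V ω))
        = ∑ i, ∑ j, ∫ ω, (Y i j - M i j * V ω i j) ^ 2 := by
      simp only [frobSq, hent]
      rw [integral_finset_sum _ (fun i _ => integrable_finset_sum _
        (fun j _ => hint (Y i j) (M i j) i j))]
      exact Finset.sum_congr rfl fun i _ =>
        integral_finset_sum _ (fun j _ => hint (Y i j) (M i j) i j)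
    rw [h1]
    rw [Finset.sum_div, ← Finset.sum_add_distrib]
    refine Finset.sum_congr rfl fun i _ => ?_
    rw [Finset.sum_div, ← Finset.sum_add_distrib]
    refine Finset.sum_congr rfl fun j _ => ?_
    rw [hval (Y i j) (M i j) i j]
    field_simp
    ring
  constructor
  · intro W
    rw [key, key]
    have hsum : ∑ i, ∑ j, ((X * W₀) i j - p * Y i j) ^ 2
        ≤ ∑ i, ∑ j, ((X * W) i j - p * Y i j) ^ 2 := by
      set R : Matrix (Fin N) (Fin C) ℝ := X * W₀ - p • Y with hRdef
      have hRentry : ∀ i j, R i j = (X * W₀) i j - p * Y i j := by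
        intro i j; simp [hRdef, Matrix.sub_apply]
      have e1 : Xᵀ * (X * W₀) = p • (Xᵀ * Y) := by
        rw [← Matrix.mul_assoc, hX, hW₀def, hinv, Matrix.smul_mul, Matrix.one_mul,
          Matrix.smul_mul, Matrix.one_mul, smul_smul, smul_smul]
        congr 1
        field_simp
      have hXR : Xᵀ * R = 0 := by
        rw [hRdef, Matrix.mul_sub, e1, Matrix.mul_smul, sub_self]
      set Δ : Matrix (Fin D) (Fin C) ℝ := W - W₀ with hΔdef
      have hdecomp : ∀ i j, (X * W) i j - p * Y i j = R i j + (X * Δ) i j := by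
        intro i j
        have : X * W = X * W₀ + X * Δ := by
          rw [hΔdef, Matrix.mul_sub]; abel
        rw [this, hRentry]
        simp [Matrix.add_apply]
        ring
      calc ∑ i, ∑ j, ((X * W₀) i j - p * Y i j) ^ 2
          = ∑ i, ∑ j, (R i j) ^ 2 := by
            refine Finset.sum_congr rfl fun i _ => Finset.sum_congr rfl fun j _ => ?_
            rw [hRentry]
        _ ≤ ∑ i, ∑ j, (R i j) ^ 2 + ∑ i, ∑ j, ((X * Δ) i j) ^ 2 := by
            have : (0:ℝ) ≤ ∑ i, ∑ j, ((X * Δ) i j) ^ 2 :=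
              Finset.sum_nonneg fun i _ => Finset.sum_nonneg fun j _ => sq_nonneg _
            linarith
        _ = ∑ i, ∑ j, ((X * W) i j - p * Y i j) ^ 2 := by
            have hcross := ls_cross X R hXR Δ
            have : ∀ i j, ((X * W) i j - p * Y i j) ^ 2
                = (R i j) ^ 2 + ((X * Δ) i j) ^ 2 + 2 * ((X * Δ) i j * R i j) := by
              intro i j; rw [hdecomp]; ring
            simp only [this, Finset.sum_add_distrib]
            have h3 : ∑ x, ∑ y, 2 * ((X * Δ) x y * R x y) = 0 := by
              simp_rw [← Finset.mul_sum]
              rw [hcross, mul_zero]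
            linarith [h3]
    have h2 : (0:ℝ) < p := hp
    gcongr
  · have : c + c * (1 / p - 1) = c / p := by field_simp; ring
    rw [this]
    have : c / (c / p) = p := by field_simp
    rw [this]
end

section
/- Let V ∈ R^{N×r} be a random matrix with i.i.d. entries equal to 1/λ with probability λ ∈ (0,1) and 0 otherwise. For fixed Y ∈ R^{N×C}, X ∈ R^{N×D}, W ∈ R^{D×C}, A ∈ R^{D×r}, B ∈ R^{r×C}, E[‖Y − XW − ((XA)⊙V)B‖_F²] = ‖Y − XW‖_F² − 2 tr((Y − XW)ᵀXAB) + ‖XAB‖_F² + ((1−λ)/λ) · Σ_{i=1}^{r} ‖X A_{:,i} B_{i,:}‖_F². -/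
open MeasureTheory ProbabilityTheory Matrix

lemma myIntegrableDirac {g : ℝ → ℝ} (hg : Measurable g) (x : ℝ) :
    Integrable g (Measure.dirac x) :=
  ⟨hg.aestronglyMeasurable, by
    rw [HasFiniteIntegral, lintegral_dirac]
    exact ENNReal.coe_lt_top⟩

lemma myMixIntegrable {g : ℝ → ℝ} (hg : Measurable g) (l : ℝ) :
    Integrable g (ENNReal.ofReal l • Measure.dirac (1 / l)
      + ENNReal.ofReal (1 - l) • Measure.dirac (0:ℝ)) :=
  ((myIntegrableDirac hg _).smul_measure ENNReal.ofReal_ne_top).add_measure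
    ((myIntegrableDirac hg _).smul_measure ENNReal.ofReal_ne_top)

lemma myMixIntegral {g : ℝ → ℝ} (hg : Measurable g) (l : ℝ) (hl : 0 < l) (hl1 : l < 1) :
    ∫ x, g x ∂(ENNReal.ofReal l • Measure.dirac (1 / l)
      + ENNReal.ofReal (1 - l) • Measure.dirac (0:ℝ)) = l * g (1 / l) + (1 - l) * g 0 := by
  rw [integral_add_measure ((myIntegrableDirac hg _).smul_measure ENNReal.ofReal_ne_top)
      ((myIntegrableDirac hg _).smul_measure ENNReal.ofReal_ne_top),
    integral_smul_measure, integral_smul_measure, integral_dirac, integral_dirac,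
    ENNReal.toReal_ofReal hl.le, ENNReal.toReal_ofReal (by linarith)]
  simp [smul_eq_mul]


/-- Expected LoRA loss with dropout at the rank-`r` bottleneck:
`E[‖Y − XW − ((XA)⊙V)B‖²] = ‖Y−XW‖² − 2tr((Y−XW)ᵀXAB) + ‖XAB‖²
  + ((1−λ)/λ)·Σᵢ ‖X A_{:,i} B_{i,:}‖²`. -/
theorem stmt3 {Ω : Type*} [MeasureSpace Ω] [IsProbabilityMeasure (ℙ : Measure Ω)]
    {N C D r : ℕ} (l : ℝ) (hl : 0 < l) (hl1 : l < 1)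
    (Y : Matrix (Fin N) (Fin C) ℝ) (X : Matrix (Fin N) (Fin D) ℝ)
    (W : Matrix (Fin D) (Fin C) ℝ)
    (A : Matrix (Fin D) (Fin r) ℝ) (B : Matrix (Fin r) (Fin C) ℝ)
    (V : Ω → Matrix (Fin N) (Fin r) ℝ)
    (hmeas : ∀ i j, Measurable fun ω => V ω i j)
    (hdist : ∀ i j, Measure.map (fun ω => V ω i j) ℙ
      = ENNReal.ofReal l • Measure.dirac (1 / l) + ENNReal.ofReal (1 - l) • Measure.dirac 0)
    (hindep : iIndepFun
      (fun (ij : Fin N × Fin r) ω => V ω ij.1 ij.2) ℙ) :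
    ∫ ω, frobSq (Y - X * W - Matrix.hadamard (X * A) (V ω) * B) =
      frobSq (Y - X * W) - 2 * Matrix.trace ((Y - X * W)ᵀ * (X * A * B))
        + frobSq (X * A * B)
        + ((1 - l) / l) *
            ∑ i : Fin r, frobSq (X * Matrix.of fun d c => A d i * B i c) := by
  
  have hl0 : l ≠ 0 := hl.ne'
  -- integrability and moments of V entries
  have intg : ∀ (g : ℝ → ℝ), Measurable g → ∀ (n : Fin N) (i : Fin r),
      Integrable (fun ω => g (V ω n i)) ℙ := by
    intro g hg n i
    have := (integrable_map_measure hg.aestronglyMeasurable (hmeas n i).aemeasurable).mp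
      (by rw [hdist]; exact myMixIntegrable hg l)
    exact this
  have Eg : ∀ (g : ℝ → ℝ), Measurable g → ∀ (n : Fin N) (i : Fin r),
      ∫ ω, g (V ω n i) = l * g (1 / l) + (1 - l) * g 0 := by
    intro g hg n i
    rw [← integral_map (hmeas n i).aemeasurable hg.aestronglyMeasurable, hdist,
      myMixIntegral hg l hl hl1]
  have intV : ∀ n i, Integrable (fun ω => V ω n i) ℙ := fun n i =>
    intg id measurable_id n i
  have EV : ∀ n i, ∫ ω, V ω n i = 1 := by
    intro n i
    have h := Eg id measurable_id n i
    simp only [id_eq] at h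
    rw [h]
    field_simp
    ring
  have EV2 : ∀ n i, ∫ ω, (V ω n i) ^ 2 = 1 / l := by
    intro n i
    have h := Eg (fun x => x ^ 2) (measurable_id.pow_const 2) n i
    rw [h]
    field_simp
    ring
  have hVVint : ∀ (n : Fin N) (i j : Fin r), Integrable (fun ω => V ω n i * V ω n j) ℙ := by
    intro n i j
    rcases eq_or_ne i j with rfl | hij
    · have h := intg (fun x => x ^ 2) (measurable_id.pow_const 2) n i
      simp only [pow_two] at h
      exact h
    · exact (hindep.indepFun (show ((n,i) : Fin N × Fin r) ≠ (n,j) by simp [hij])).integrable_mul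
        (intV n i) (intV n j)
  have hVV : ∀ (n : Fin N) (i j : Fin r),
      ∫ ω, V ω n i * V ω n j = if i = j then 1 / l else 1 := by
    intro n i j
    rcases eq_or_ne i j with rfl | hij
    · have h := EV2 n i
      simp only [pow_two] at h
      simpa using h
    · rw [if_neg hij]
      have h := (hindep.indepFun (show ((n,i) : Fin N × Fin r) ≠ (n,j)
        by simp [hij])).integral_fun_mul_eq_mul_integral (intV n i).1 (intV n j).1
      exact h.trans (by rw [EV, EV, mul_one])
  -- key entrywise computation
  have key : ∀ (n : Fin N) (R0 : ℝ) (a : Fin r → ℝ),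
      Integrable (fun ω => (R0 - ∑ i, a i * V ω n i) ^ 2) ℙ ∧
      ∫ ω, (R0 - ∑ i, a i * V ω n i) ^ 2 =
        R0 ^ 2 - 2 * R0 * (∑ i, a i) + (∑ i, a i) ^ 2 + (1 / l - 1) * ∑ i, (a i) ^ 2 := by
    intro n R0 a
    have hexp : ∀ ω, (R0 - ∑ i, a i * V ω n i) ^ 2
        = R0 ^ 2 - 2 * R0 * (∑ i, a i * V ω n i)
          + ∑ i, ∑ j, (a i * a j) * (V ω n i * V ω n j) := by
      intro ω
      rw [sub_sq]
      congr 1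
      rw [sq (∑ i, a i * V ω n i), Finset.sum_mul_sum]
      exact Finset.sum_congr rfl fun i _ => Finset.sum_congr rfl fun j _ => by ring
    have hS : Integrable (fun ω => ∑ i, a i * V ω n i) ℙ :=
      integrable_finset_sum _ fun i _ => (intV n i).const_mul (a i)
    have hQ : Integrable (fun ω => ∑ i, ∑ j, (a i * a j) * (V ω n i * V ω n j)) ℙ :=
      integrable_finset_sum _ fun i _ =>
        integrable_finset_sum _ fun j _ => (hVVint n i j).const_mul _
    have hS2 : Integrable (fun ω => R0 ^ 2 - 2 * R0 * ∑ i, a i * V ω n i) ℙ :=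
      (integrable_const (R0 ^ 2)).sub (hS.const_mul (2 * R0))
    have hSQ : Integrable (fun ω => R0 ^ 2 - 2 * R0 * (∑ i, a i * V ω n i)
        + ∑ i, ∑ j, (a i * a j) * (V ω n i * V ω n j)) ℙ := hS2.add hQ
    have hint : Integrable (fun ω => (R0 - ∑ i, a i * V ω n i) ^ 2) ℙ := by
      apply Integrable.congr hSQ
      filter_upwards with ω using (hexp ω).symm
    refine ⟨hint, ?_⟩
    have hES : ∫ ω, ∑ i, a i * V ω n i = ∑ i, a i := by
      rw [integral_finset_sum _ fun i _ => (intV n i).const_mul (a i)]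
      refine Finset.sum_congr rfl fun i _ => ?_
      rw [integral_const_mul, EV, mul_one]
    have hEQ : ∫ ω, ∑ i, ∑ j, (a i * a j) * (V ω n i * V ω n j)
        = (∑ i, a i) ^ 2 + (1 / l - 1) * ∑ i, (a i) ^ 2 := by
      rw [integral_finset_sum _ fun i _ =>
        integrable_finset_sum _ fun j _ => (hVVint n i j).const_mul _]
      have step : ∀ i : Fin r, ∫ ω, ∑ j, (a i * a j) * (V ω n i * V ω n j)
          = ∑ j, (a i * a j) * (if i = j then 1 / l else 1) := by
        intro i
        rw [integral_finset_sum _ fun j _ => (hVVint n i j).const_mul _]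
        exact Finset.sum_congr rfl fun j _ => by rw [integral_const_mul, hVV]
      simp_rw [step]
      have split : ∀ i j : Fin r, (a i * a j) * (if i = j then 1 / l else 1)
          = a i * a j + (if i = j then (a j) ^ 2 * (1 / l - 1) else 0) := by
        intro i j
        split_ifs with h
        · subst h; ring
        · ring
      simp_rw [split, Finset.sum_add_distrib, Finset.sum_ite_eq, Finset.mem_univ, if_true]
      conv_rhs => rw [pow_two, Finset.sum_mul_sum]
      rw [← Finset.sum_mul]
      ring
    simp_rw [hexp]
    rw [integral_add hS2 hQ, integral_sub (integrable_const (R0 ^ 2))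
        (hS.const_mul (2 * R0)), integral_const, integral_const_mul, hES, hEQ]
    simp
    ring
  -- entry of the residual matrix
  have hentry : ∀ (ω : Ω) (n : Fin N) (c : Fin C),
      (Y - X * W - Matrix.hadamard (X * A) (V ω) * B) n c
        = (Y - X * W) n c - ∑ i, ((X * A) n i * B i c) * V ω n i := by
    intro ω n c
    rw [Matrix.sub_apply, Matrix.mul_apply]
    congr 1
    exact Finset.sum_congr rfl fun i _ => by
      simp [Matrix.hadamard_apply]; ring
  -- rewrite LHS
  simp only [frobSq]
  simp_rw [hentry]
  rw [integral_finset_sum _ fun n _ => integrable_finset_sum _ fun c _ =>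
    (key n ((Y - X * W) n c) (fun i => (X * A) n i * B i c)).1]
  have lhs_eq : ∀ n : Fin N, ∫ ω, ∑ c, ((Y - X * W) n c - ∑ i, ((X * A) n i * B i c) * V ω n i) ^ 2
      = ∑ c, (((Y - X * W) n c) ^ 2 - 2 * ((Y - X * W) n c) * ((X * A * B) n c)
          + ((X * A * B) n c) ^ 2 + (1 / l - 1) * ∑ i, ((X * A) n i * B i c) ^ 2) := by
    intro n
    rw [integral_finset_sum _ fun c _ =>
      (key n ((Y - X * W) n c) (fun i => (X * A) n i * B i c)).1]
    refine Finset.sum_congr rfl fun c _ => ?_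
    rw [(key n ((Y - X * W) n c) (fun i => (X * A) n i * B i c)).2]
    rw [show (∑ i, (X * A) n i * B i c) = (X * A * B) n c from (Matrix.mul_apply).symm]
  simp_rw [lhs_eq]
  -- now pure algebra
  have hXof : ∀ (i : Fin r) (n : Fin N) (c : Fin C),
      (X * Matrix.of fun d c => A d i * B i c) n c = (X * A) n i * B i c := by
    intro i n c
    rw [Matrix.mul_apply, Matrix.mul_apply, Finset.sum_mul]
    exact Finset.sum_congr rfl fun d _ => by simp [mul_assoc]
  have htr : Matrix.trace ((Y - X * W)ᵀ * (X * A * B))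
      = ∑ n, ∑ c, (Y - X * W) n c * (X * A * B) n c := by
    rw [Matrix.trace]
    simp_rw [Matrix.diag, Matrix.mul_apply, Matrix.transpose_apply]
    exact Finset.sum_comm
  rw [htr]
  simp_rw [hXof]
  have hll : (1 - l) / l = 1 / l - 1 := by field_simp
  rw [hll, show (∑ i : Fin r, ∑ n : Fin N, ∑ c : Fin C, ((X * A) n i * B i c) ^ 2)
      = ∑ n : Fin N, ∑ c : Fin C, ∑ i : Fin r, ((X * A) n i * B i c) ^ 2 from by
        rw [Finset.sum_comm]; exact Finset.sum_congr rfl fun n _ => Finset.sum_comm]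
  simp only [Finset.mul_sum]
  simp only [← Finset.sum_sub_distrib, ← Finset.sum_add_distrib]
  refine Finset.sum_congr rfl fun n _ => Finset.sum_congr rfl fun c _ => ?_
  ring
end

section
/- Identity: for A ∈ R^{D×r}, B ∈ R^{r×C}, X ∈ R^{N×D}, and V a random N×C matrix with i.i.d. entries of mean 1 and variance (1−λ)/λ, one has E[‖((XA)⊙V)B‖_F²] = ‖XAB‖_F² + ((1−λ)/λ) Σ_{i=1}^r ‖X A_{:,i}‖₂² ‖B_{i,:}‖₂². -/
open MeasureTheory ProbabilityTheory Matrix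

section aux

variable {Ω : Type*} [MeasureSpace Ω] [IsProbabilityMeasure (ℙ : Measure Ω)]

lemma aux_integrable_dirac {f : ℝ → ℝ} (hf : Measurable f) (x : ℝ) :
    Integrable f (Measure.dirac x) := by
  refine ⟨hf.aestronglyMeasurable, ?_⟩
  rw [HasFiniteIntegral, lintegral_dirac]
  exact ENNReal.coe_lt_top

lemma aux_moment {g : Ω → ℝ} (hg : Measurable g) {l : ℝ} (hl : 0 < l) (hl1 : l < 1)
    (hd : Measure.map g ℙ
      = ENNReal.ofReal l • Measure.dirac (1 / l) + ENNReal.ofReal (1 - l) • Measure.dirac 0)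
    {f : ℝ → ℝ} (hf : Measurable f) :
    ∫ ω, f (g ω) = l * f (1 / l) + (1 - l) * f 0 := by
  have h1 : Integrable f (ENNReal.ofReal l • Measure.dirac (1 / l) : Measure ℝ) :=
    (aux_integrable_dirac hf _).smul_measure ENNReal.ofReal_ne_top
  have h2 : Integrable f (ENNReal.ofReal (1 - l) • Measure.dirac (0 : ℝ) : Measure ℝ) :=
    (aux_integrable_dirac hf _).smul_measure ENNReal.ofReal_ne_top
  rw [← integral_map hg.aemeasurable hf.aestronglyMeasurable, hd,
    integral_add_measure h1 h2, integral_smul_measure, integral_smul_measure,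
    integral_dirac, integral_dirac, ENNReal.toReal_ofReal hl.le,
    ENNReal.toReal_ofReal (by linarith)]
  simp [smul_eq_mul]

lemma aux_ae_mem {g : Ω → ℝ} (hg : Measurable g) {l : ℝ} (hl : 0 < l)
    (hd : Measure.map g ℙ
      = ENNReal.ofReal l • Measure.dirac (1 / l) + ENNReal.ofReal (1 - l) • Measure.dirac 0) :
    ∀ᵐ ω, g ω ∈ ({0, 1 / l} : Set ℝ) := by
  have hs : MeasurableSet ({0, 1 / l} : Set ℝ) :=
    (measurableSet_singleton (1 / l)).insert 0
  have h0 : ℙ (g ⁻¹' ({0, 1 / l} : Set ℝ)ᶜ) = 0 := by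
    rw [← Measure.map_apply hg hs.compl, hd]
    simp [Measure.dirac_apply' _ hs.compl, Set.indicator_apply]
  rw [ae_iff]
  exact h0

lemma aux_ae_bound {g : Ω → ℝ} (hg : Measurable g) {l : ℝ} (hl : 0 < l)
    (hd : Measure.map g ℙ
      = ENNReal.ofReal l • Measure.dirac (1 / l) + ENNReal.ofReal (1 - l) • Measure.dirac 0) :
    ∀ᵐ ω, |g ω| ≤ 1 / l := by
  filter_upwards [aux_ae_mem hg hl hd] with ω hω
  rcases hω with h | h
  · rw [h]; simp; positivity
  · rw [Set.mem_singleton_iff] at h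
    rw [h, abs_of_nonneg (by positivity)]

lemma aux_integrable_of_bound {h : Ω → ℝ} (hm : Measurable h) {C : ℝ}
    (hb : ∀ᵐ ω, |h ω| ≤ C) : Integrable h ℙ :=
  ⟨hm.aestronglyMeasurable,
    HasFiniteIntegral.of_bounded (by simpa [Real.norm_eq_abs] using hb)⟩

end aux

/-- Second moment of the dropped-out LoRA output: for a dropout mask `V ∈ ℝ^{N×r}`
with i.i.d. entries `1/λ` w.p. `λ` and `0` otherwise,
`E[‖((XA)⊙V)B‖²] = ‖XAB‖² + ((1−λ)/λ)Σᵢ‖XA_{:,i}‖²‖B_{i,:}‖²`. -/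
theorem stmt9 {Ω : Type*} [MeasureSpace Ω] [IsProbabilityMeasure (ℙ : Measure Ω)]
    {N C D r : ℕ} (l : ℝ) (hl : 0 < l) (hl1 : l < 1)
    (X : Matrix (Fin N) (Fin D) ℝ)
    (A : Matrix (Fin D) (Fin r) ℝ) (B : Matrix (Fin r) (Fin C) ℝ)
    (V : Ω → Matrix (Fin N) (Fin r) ℝ)
    (hmeas : ∀ i j, Measurable fun ω => V ω i j)
    (hdist : ∀ i j, Measure.map (fun ω => V ω i j) ℙ
      = ENNReal.ofReal l • Measure.dirac (1 / l) + ENNReal.ofReal (1 - l) • Measure.dirac 0)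
    (hindep : iIndepFun
      (fun (ij : Fin N × Fin r) ω => V ω ij.1 ij.2) ℙ) :
    ∫ ω, frobSq (Matrix.hadamard (X * A) (V ω) * B) =
      frobSq (X * A * B)
        + ((1 - l) / l) *
            ∑ i : Fin r, (∑ n, ((X * A) n i) ^ 2) * (∑ c, (B i c) ^ 2) := by
  set M := X * A with hM
  have hbd : ∀ n i, ∀ᵐ ω, |V ω n i| ≤ 1 / l := fun n i => aux_ae_bound (hmeas n i) hl (hdist n i)
  have hmean : ∀ n i, ∫ ω, V ω n i = 1 := by
    intro n i
    have := aux_moment (hmeas n i) hl hl1 (hdist n i) (f := id) measurable_id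
    simp only [id] at this
    rw [this]; field_simp; ring
  have hsq : ∀ n i, ∫ ω, (V ω n i) * (V ω n i) = 1 / l := by
    intro n i
    have := aux_moment (hmeas n i) hl hl1 (hdist n i) (f := fun x => x * x)
      (measurable_id.mul measurable_id)
    rw [this]; field_simp; ring
  have hcross : ∀ n (i j : Fin r), i ≠ j → ∫ ω, (V ω n i) * (V ω n j) = 1 := by
    intro n i j hij
    have hInd : IndepFun (fun ω => V ω n i) (fun ω => V ω n j) ℙ :=
      hindep.indepFun (i := (n, i)) (j := (n, j)) (by simp [hij])
    have h1 : Integrable (fun ω => V ω n i) ℙ :=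
      aux_integrable_of_bound (hmeas n i) (hbd n i)
    have h2 : Integrable (fun ω => V ω n j) ℙ :=
      aux_integrable_of_bound (hmeas n j) (hbd n j)
    have h : ∫ ω, V ω n i * V ω n j = (∫ ω, V ω n i) * ∫ ω, V ω n j :=
      hInd.integral_mul_eq_mul_integral h1.1 h2.1
    rw [h, hmean n i, hmean n j]; ring
  have hVV : ∀ n (i j : Fin r), ∫ ω, (V ω n i) * (V ω n j)
      = if i = j then 1 / l else 1 := by
    intro n i j; by_cases h : i = j
    · subst h; simp [hsq n i]
    · simp [h, hcross n i j h]
  -- integrability of the quadratic terms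
  have hint : ∀ n c (i j : Fin r),
      Integrable (fun ω => (M n i * B i c) * (M n j * B j c) * (V ω n i * V ω n j)) ℙ := by
    intro n c i j
    apply aux_integrable_of_bound (measurable_const.mul ((hmeas n i).mul (hmeas n j)))
      (C := |(M n i * B i c) * (M n j * B j c)| * (1 / l * (1 / l)))
    filter_upwards [hbd n i, hbd n j] with ω h1 h2
    have h0 : (0:ℝ) ≤ 1 / l := by positivity
    have hb : |V ω n i| * |V ω n j| ≤ 1 / l * (1 / l) :=
      mul_le_mul h1 h2 (abs_nonneg _) h0
    show |(M n i * B i c * (M n j * B j c)) * (V ω n i * V ω n j)| ≤ _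
    rw [abs_mul]
    exact mul_le_mul_of_nonneg_left (by rw [abs_mul]; exact hb : |V ω n i * V ω n j| ≤ 1 / l * (1 / l)) (abs_nonneg _)
  have hrw : ∀ n c ω, (∑ i, M n i * V ω n i * B i c) ^ 2
      = ∑ i, ∑ j, (M n i * B i c) * (M n j * B j c) * (V ω n i * V ω n j) := by
    intro n c ω
    rw [sq, Finset.sum_mul_sum]
    exact Finset.sum_congr rfl fun i _ => Finset.sum_congr rfl fun j _ => by ring
  have hintsq : ∀ n c, Integrable (fun ω => (∑ i, M n i * V ω n i * B i c) ^ 2) ℙ := by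
    intro n c
    have : (fun ω => (∑ i, M n i * V ω n i * B i c) ^ 2)
        = fun ω => ∑ i, ∑ j, (M n i * B i c) * (M n j * B j c) * (V ω n i * V ω n j) := by
      funext ω; exact hrw n c ω
    rw [this]
    exact integrable_finset_sum _ fun i _ => integrable_finset_sum _ fun j _ => hint n c i j
  have key : ∀ n c, ∫ ω, (∑ i, M n i * V ω n i * B i c) ^ 2
      = (∑ i, M n i * B i c) ^ 2 + (1 - l) / l * ∑ i, (M n i * B i c) ^ 2 := by
    intro n c
    simp only [hrw n c]
    rw [integral_finset_sum _ (fun i _ => integrable_finset_sum _ fun j _ => hint n c i j)]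
    have hinner : ∀ i : Fin r, ∫ ω, ∑ j, (M n i * B i c) * (M n j * B j c) * (V ω n i * V ω n j)
        = ∑ j, (M n i * B i c) * (M n j * B j c) * (if i = j then 1 / l else 1) := by
      intro i
      rw [integral_finset_sum _ fun j _ => hint n c i j]
      refine Finset.sum_congr rfl fun j _ => ?_
      rw [integral_const_mul, hVV n i j]
    simp only [hinner]
    have h1 : ∀ i j : Fin r, (M n i * B i c) * (M n j * B j c) * (if i = j then 1 / l else 1)
        = (M n i * B i c) * (M n j * B j c)
          + (if j = i then (M n i * B i c) * (M n j * B j c) * ((1 - l) / l) else 0) := by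
      intro i j
      by_cases h : i = j
      · subst h; rw [if_pos rfl, if_pos rfl]; field_simp; ring
      · simp [h, Ne.symm h]
    simp only [h1, Finset.sum_add_distrib, Finset.sum_ite_eq', Finset.mem_univ, if_true]
    rw [sq, Finset.sum_mul_sum, Finset.mul_sum]
    congr 1
    exact Finset.sum_congr rfl fun i _ => by ring
  -- expand frobSq everywhere
  simp only [frobSq, Matrix.mul_apply, Matrix.hadamard_apply]
  calc ∫ ω, ∑ n, ∑ c, (∑ i, M n i * V ω n i * B i c) ^ 2
      = ∑ n, ∑ c, ∫ ω, (∑ i, M n i * V ω n i * B i c) ^ 2 := by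
        rw [integral_finset_sum _ fun n _ => integrable_finset_sum _ fun c _ => hintsq n c]
        exact Finset.sum_congr rfl fun n _ =>
          integral_finset_sum _ fun c _ => hintsq n c
    _ = ∑ n, ∑ c, ((∑ i, M n i * B i c) ^ 2 + (1 - l) / l * ∑ i, (M n i * B i c) ^ 2) :=
        Finset.sum_congr rfl fun n _ => Finset.sum_congr rfl fun c _ => key n c
    _ = (∑ n, ∑ c, (∑ i, M n i * B i c) ^ 2)
          + (1 - l) / l * ∑ i : Fin r, (∑ n, (M n i) ^ 2) * (∑ c, (B i c) ^ 2) := by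
        simp only [Finset.sum_add_distrib, ← Finset.mul_sum]
        congr 1
        congr 1
        calc ∑ n, ∑ c, ∑ i, (M n i * B i c) ^ 2
            = ∑ n, ∑ i : Fin r, ∑ c, (M n i) ^ 2 * (B i c) ^ 2 := by
              refine Finset.sum_congr rfl fun n _ => ?_
              rw [Finset.sum_comm]
              exact Finset.sum_congr rfl fun i _ =>
                Finset.sum_congr rfl fun c _ => mul_pow _ _ _
          _ = ∑ i : Fin r, ∑ n, ∑ c, (M n i) ^ 2 * (B i c) ^ 2 := by
              rw [Finset.sum_comm]
          _ = ∑ i : Fin r, (∑ n, (M n i) ^ 2) * (∑ c, (B i c) ^ 2) :=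
              Finset.sum_congr rfl fun i _ => (Finset.sum_mul_sum _ _ _ _).symm
end
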